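/- arXiv:2301.05424 — 4 statements merged into one kernel-verified Lean document; each statement's English description precedes it below -/
import Mathlib

section
/- Let θ : ℝ⁴ → ℝ and U : ℝ⁴ → ℝ⁴ be differentiable at a point x, with θ(x) > 0 and g_{αβ}U^α(y)U^β(y) = −1 for all y in a neighborhood of x, where g = diag(−1,1,1,1). Define ψ : ℝ⁴ → ℝ⁴ by ψ_γ := U_γ/θ (where U_γ = g_{γδ}U^δ). Then for every direction w ∈ ℝ⁴: (i) Dθ_x(w) = θ(x)² U^γ(x) (Dψ_γ)_x(w), and (ii) (DU^σ)_x(w) = θ(x) Π^{σγ}(x) (Dψ_γ)_x(w), where Π^{σγ} = g^{σγ} + U^σU^γ. -/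
open scoped BigOperators

/-- The Minkowski metric `diag(-1,1,1,1)` (diagonal entries). -/
noncomputable def gmink : Fin 4 → ℝ := fun i => if i = 0 then -1 else 1

/-- The spatial projector `Π^{σγ} = g^{σγ} + U^σ U^γ`. -/
noncomputable def proj (U : Fin 4 → ℝ) : Fin 4 → Fin 4 → ℝ :=
  fun σ γ => (if σ = γ then gmink σ else 0) + U σ * U γ

/-- Gradients of temperature `θ` and velocity `U` expressed through the gradient of
the Godunov–Boillat variables `ψ_γ = U_γ/θ = gmink γ * U^γ / θ`. -/
theorem stmt2 (θ : (Fin 4 → ℝ) → ℝ) (U : (Fin 4 → ℝ) → Fin 4 → ℝ) (x : Fin 4 → ℝ)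
    (hθ : DifferentiableAt ℝ θ x)
    (hU : ∀ σ, DifferentiableAt ℝ (fun y => U y σ) x)
    (hpos : 0 < θ x)
    (hunit : ∀ᶠ y in nhds x, ∑ α, gmink α * U y α * U y α = -1) :
    ∀ w : Fin 4 → ℝ,
      (fderiv ℝ θ x w
        = θ x ^ 2 * ∑ γ, U x γ * fderiv ℝ (fun y => gmink γ * U y γ / θ y) x w) ∧
      (∀ σ : Fin 4, fderiv ℝ (fun y => U y σ) x w
        = θ x * ∑ γ, proj (U x) σ γ * fderiv ℝ (fun y => gmink γ * U y γ / θ y) x w) := by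
  intro w
  have hne : θ x ≠ 0 := ne_of_gt hpos
  set t := fderiv ℝ θ x w with ht
  set a : Fin 4 → ℝ := fun γ => fderiv ℝ (fun y => U y γ) x w with ha
  -- derivative of ψ_γ
  have hψ : ∀ γ, fderiv ℝ (fun y => gmink γ * U y γ / θ y) x w
      = gmink γ * a γ / θ x - gmink γ * U x γ * t / θ x ^ 2 := by
    intro γ
    have hinv : HasFDerivAt (fun y => (θ y)⁻¹)
        ((ContinuousLinearMap.smulRight (1 : ℝ →L[ℝ] ℝ) (-(θ x ^ 2)⁻¹)).comp (fderiv ℝ θ x)) x :=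
      (hasFDerivAt_inv hne).comp x hθ.hasFDerivAt
    have hnum : HasFDerivAt (fun y => gmink γ * U y γ)
        (gmink γ • fderiv ℝ (fun y => U y γ) x) x := (hU γ).hasFDerivAt.const_mul _
    have hmul := hnum.mul hinv
    have : fderiv ℝ (fun y => gmink γ * U y γ * (θ y)⁻¹) x
        = (gmink γ * U x γ) • ((ContinuousLinearMap.smulRight (1 : ℝ →L[ℝ] ℝ) (-(θ x ^ 2)⁻¹)).comp (fderiv ℝ θ x))
          + (θ x)⁻¹ • (gmink γ • fderiv ℝ (fun y => U y γ) x) := hmul.fderiv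
    simp only [div_eq_mul_inv]
    rw [this]
    simp [ContinuousLinearMap.smulRight_apply, ← ht, ← ha]
    field_simp
    ring
  -- constraint
  have hcon : ∑ α, gmink α * U x α * a α = 0 := by
    have hconst : fderiv ℝ (fun y => ∑ α, gmink α * U y α * U y α) x = 0 := by
      have := Filter.EventuallyEq.fderiv_eq (𝕜 := ℝ) (hunit.mono fun y hy => hy)
      rw [this, fderiv_fun_const]
      rfl
    have hsum : HasFDerivAt (fun y => ∑ α, gmink α * U y α * U y α)
        (∑ α, ((gmink α * U x α) • fderiv ℝ (fun y => U y α) x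
          + U x α • (gmink α • fderiv ℝ (fun y => U y α) x))) x := by
      apply HasFDerivAt.fun_sum
      intro α _
      exact ((hU α).hasFDerivAt.const_mul (gmink α)).mul (hU α).hasFDerivAt
    have h0 : (∑ α, ((gmink α * U x α) • fderiv ℝ (fun y => U y α) x
          + U x α • (gmink α • fderiv ℝ (fun y => U y α) x))) = 0 := by
      rw [← hsum.fderiv]; exact hconst
    have := congrArg (fun L => L w) h0
    simp only [ContinuousLinearMap.sum_apply, ContinuousLinearMap.add_apply,
      ContinuousLinearMap.smul_apply, smul_eq_mul, ContinuousLinearMap.zero_apply] at this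
    have h2 : ∑ α, (2 * (gmink α * U x α * a α)) = 0 := by
      rw [← this]; apply Finset.sum_congr rfl; intro α _; ring
    rw [← Finset.mul_sum] at h2
    linarith
  have hnorm : ∑ α, gmink α * U x α * U x α = -1 := hunit.self_of_nhds
  have hg : ∀ γ, gmink γ * gmink γ = 1 := by
    intro γ; unfold gmink; split_ifs <;> norm_num
  have hS : ∑ γ, U x γ * fderiv ℝ (fun y => gmink γ * U y γ / θ y) x w = t / θ x ^ 2 := by
    have : ∀ γ : Fin 4, U x γ * fderiv ℝ (fun y => gmink γ * U y γ / θ y) x w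
        = (gmink γ * U x γ * a γ) * (θ x)⁻¹ - (gmink γ * U x γ * U x γ) * (t / θ x ^ 2) := by
      intro γ; rw [hψ γ]; ring
    rw [Finset.sum_congr rfl fun γ _ => this γ, Finset.sum_sub_distrib,
      ← Finset.sum_mul, ← Finset.sum_mul, hcon, hnorm]
    ring
  constructor
  · rw [hS]; field_simp
  · intro σ
    have hproj : ∑ γ, proj (U x) σ γ * fderiv ℝ (fun y => gmink γ * U y γ / θ y) x w
        = gmink σ * fderiv ℝ (fun y => gmink σ * U y σ / θ y) x w
          + U x σ * (t / θ x ^ 2) := by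
      simp only [proj, add_mul]
      rw [Finset.sum_add_distrib]
      congr 1
      · simp only [ite_mul, zero_mul]
        rw [Finset.sum_ite_eq]
        simp
      · rw [← hS, Finset.mul_sum]
        exact Finset.sum_congr rfl fun γ _ => by ring
    rw [hproj, hψ σ]
    have hgσ := hg σ
    have hA : fderiv ℝ (fun y => U y σ) x w = a σ := rfl
    rw [hA]
    field_simp
    linear_combination (U x σ * t - a σ * θ x) * hgσ
end

section
/- Let χ, σ, μ, θ be positive reals and U ∈ ℝ⁴ unit timelike (g_{αβ}U^αU^β = −1, g = diag(−1,1,1,1)). Then for every (V, V₄) ∈ ℝ⁴ × ℝ with (V, V₄) ≠ 0, the quadratic form −χθ² (U^αV_α)² − σθ (g^{αγ}V_αV_γ + (U^αV_α)²) − μ V₄² is strictly negative. (This is the HKM negative-definiteness condition B^{aβcδ}U_βU_δ V_a V_c < 0 for the proposed system.) -/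
open scoped BigOperators

set_option maxHeartbeats 800000

/-- Auxiliary: `Q = s² - v₀² + |v⃗|² ≥ 0` for unit timelike `u`. -/
lemma auxB (u0 u1 u2 u3 v0 v1 v2 v3 : ℝ) (hU : u0^2 = 1 + u1^2 + u2^2 + u3^2) :
    0 ≤ (u0*v0+u1*v1+u2*v2+u3*v3)^2 - v0^2 + v1^2 + v2^2 + v3^2 := by
  have key : (u1^2+u2^2+u3^2) * ((u0*v0+u1*v1+u2*v2+u3*v3)^2 - v0^2 + v1^2 + v2^2 + v3^2)
      = ((u1^2+u2^2+u3^2)*v0 + u0*(u1*v1+u2*v2+u3*v3))^2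
        + (u1*v2-u2*v1)^2 + (u1*v3-u3*v1)^2 + (u2*v3-u3*v2)^2 := by
    linear_combination ((u1^2+u2^2+u3^2)*v0^2 - (u1*v1+u2*v2+u3*v3)^2) * hU
  rcases eq_or_lt_of_le (by positivity : (0:ℝ) ≤ u1^2+u2^2+u3^2) with hk | hk
  · have h1 : u1 = 0 := by nlinarith [sq_nonneg u2, sq_nonneg u3]
    have h2 : u2 = 0 := by nlinarith [sq_nonneg u1, sq_nonneg u3]
    have h3 : u3 = 0 := by nlinarith [sq_nonneg u1, sq_nonneg u2]
    rw [h1, h2, h3] at hU ⊢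
    nlinarith [sq_nonneg v0, sq_nonneg v1, sq_nonneg v2, sq_nonneg v3]
  · nlinarith [key, hk, sq_nonneg ((u1^2+u2^2+u3^2)*v0 + u0*(u1*v1+u2*v2+u3*v3)),
      sq_nonneg (u1*v2-u2*v1), sq_nonneg (u1*v3-u3*v1), sq_nonneg (u2*v3-u3*v2)]

/-- Auxiliary: if `u·v = 0` (Euclidean) with `u` unit timelike and `v ≠ 0`,
then the Minkowski norm of `v` is strictly positive. -/
lemma auxA (u0 u1 u2 u3 v0 v1 v2 v3 : ℝ) (hU : u0^2 = 1 + u1^2 + u2^2 + u3^2)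
    (hs : u0*v0+u1*v1+u2*v2+u3*v3 = 0) (hv : 0 < v0^2+v1^2+v2^2+v3^2) :
    0 < v1^2+v2^2+v3^2 - v0^2 := by
  have key : (u1^2+u2^2+u3^2) * (v1^2+v2^2+v3^2 - v0^2)
      = v0^2 + (u1*v2-u2*v1)^2 + (u1*v3-u3*v1)^2 + (u2*v3-u3*v2)^2 := by
    linear_combination ((u1*v1+u2*v2+u3*v3) - u0*v0) * hs + v0^2 * hU
  rcases eq_or_lt_of_le (by positivity : (0:ℝ) ≤ u1^2+u2^2+u3^2) with hk | hk
  · have h1 : u1 = 0 := by nlinarith [sq_nonneg u2, sq_nonneg u3]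
    have h2 : u2 = 0 := by nlinarith [sq_nonneg u1, sq_nonneg u3]
    have h3 : u3 = 0 := by nlinarith [sq_nonneg u1, sq_nonneg u2]
    rw [h1, h2, h3] at hU hs
    have hv0 : v0 = 0 := by
      have h : u0 * v0 = 0 := by linarith
      rcases mul_eq_zero.mp h with h' | h'
      · nlinarith
      · exact h'
    rw [hv0] at hv ⊢; nlinarith
  · nlinarith [key, hk, sq_nonneg (u1*v2-u2*v1), sq_nonneg (u1*v3-u3*v1),
      sq_nonneg (u2*v3-u3*v2), sq_nonneg v0, mul_pos hk hv]

/-- HKM negative-definiteness of the quadratic form given by the contracted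
principal coefficients `B^{aβcδ}U_βU_δ` of the proposed system. -/
theorem stmt6 (χ σ μ θ : ℝ) (hχ : 0 < χ) (hσ : 0 < σ) (hμ : 0 < μ) (hθ : 0 < θ)
    (U : Fin 4 → ℝ) (hU : ∑ α, gmink α * U α * U α = -1) :
    ∀ (V : Fin 4 → ℝ) (V4 : ℝ), ¬(V = 0 ∧ V4 = 0) →
      -(χ * θ ^ 2) * (∑ α, U α * V α) ^ 2
        - σ * θ * ((∑ α, gmink α * V α * V α) + (∑ α, U α * V α) ^ 2)
        - μ * V4 ^ 2 < 0 := by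
  intro V V4 hne
  simp [gmink, Fin.sum_univ_four] at hU ⊢
  have hU2 : (U 0)^2 = 1 + (U 1)^2 + (U 2)^2 + (U 3)^2 := by nlinarith [hU]
  set s : ℝ := U 0 * V 0 + U 1 * V 1 + U 2 * V 2 + U 3 * V 3 with hsdef
  have hQ : 0 ≤ s^2 - (V 0)^2 + (V 1)^2 + (V 2)^2 + (V 3)^2 :=
    auxB (U 0) (U 1) (U 2) (U 3) (V 0) (V 1) (V 2) (V 3) hU2
  by_cases hV4 : V4 = 0
  · have hV : V ≠ 0 := fun h => hne ⟨h, hV4⟩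
    have hv : 0 < (V 0)^2 + (V 1)^2 + (V 2)^2 + (V 3)^2 := by
      rcases Function.ne_iff.mp hV with ⟨i, hi⟩
      simp only [Pi.zero_apply] at hi
      fin_cases i <;> positivity
    by_cases hs0 : s = 0
    · have hA : 0 < (V 1)^2 + (V 2)^2 + (V 3)^2 - (V 0)^2 :=
        auxA (U 0) (U 1) (U 2) (U 3) (V 0) (V 1) (V 2) (V 3) hU2 hs0 hv
      have h2 : 0 < σ * θ * ((V 1)^2 + (V 2)^2 + (V 3)^2 - (V 0)^2) :=
        mul_pos (mul_pos hσ hθ) hA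
      have h1 : 0 ≤ χ * θ^2 * s^2 := by positivity
      have h3 : 0 ≤ μ * V4^2 := by positivity
      nlinarith [h1, h2, h3, hs0]
    · have h1 : 0 < χ * θ^2 * s^2 := by positivity
      have h2 : 0 ≤ σ * θ * (s^2 - (V 0)^2 + (V 1)^2 + (V 2)^2 + (V 3)^2) :=
        mul_nonneg (le_of_lt (mul_pos hσ hθ)) hQ
      have h3 : 0 ≤ μ * V4^2 := by positivity
      nlinarith [h1, h2, h3]
  · have h1 : 0 ≤ χ * θ^2 * s^2 := by positivity
    have h2 : 0 ≤ σ * θ * (s^2 - (V 0)^2 + (V 1)^2 + (V 2)^2 + (V 3)^2) :=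
      mul_nonneg (le_of_lt (mul_pos hσ hθ)) hQ
    have h3 : 0 < μ * V4^2 := by positivity
    nlinarith [h1, h2, h3]
end

section
/- Let χ, η, μ, θ be positive reals and ζ̃ ≥ −η/3. Let U, N ∈ ℝ⁴ satisfy g_{αβ}U^αU^β = −1, g_{αβ}N^αN^β = 1, g_{αβ}U^αN^β = 0 (g = diag(−1,1,1,1)). Then for every (V, V₄) ∈ ℝ⁴ × ℝ with (V, V₄) ≠ 0, the quadratic form χθ² (U^αV_α)² + ηθ (g^{αγ}V_αV_γ + (U^αV_α)²) + ((1/3)η + ζ̃)θ (N^αV_α)² + μ V₄² is strictly positive. (This is the HKM positive-definiteness condition B^{aβcδ}N_βN_δ V_a V_c > 0 for the proposed system.) -/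
open scoped BigOperators

set_option maxHeartbeats 1000000 in
private lemma keylem (u0 u1 u2 u3 v0 v1 v2 v3 a p1 p2 p3 : ℝ)
    (ha : a = u0 * v0 + u1 * v1 + u2 * v2 + u3 * v3)
    (hp1 : p1 = v1 + a * u1) (hp2 : p2 = v2 + a * u2) (hp3 : p3 = v3 + a * u3)
    (h : -(u0 * u0) + u1 * u1 + u2 * u2 + u3 * u3 = -1) :
    u0 ^ 2 * ((-(v0 ^ 2) + v1 ^ 2 + v2 ^ 2 + v3 ^ 2) + a ^ 2)
      = (p1 ^ 2 + p2 ^ 2 + p3 ^ 2)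
        + ((u1 * p2 - u2 * p1) ^ 2 + (u1 * p3 - u3 * p1) ^ 2 + (u2 * p3 - u3 * p2) ^ 2) := by
  subst hp1 hp2 hp3 ha
  linear_combination (-(v1 ^ 2 + v2 ^ 2 + v3 ^ 2
      + (u0 * v0 + u1 * v1 + u2 * v2 + u3 * v3) ^ 2)) * h

private lemma key0lem (u0 u1 u2 u3 v0 v1 v2 v3 : ℝ)
    (h : -(u0 * u0) + u1 * u1 + u2 * u2 + u3 * u3 = -1)
    (hA : u0 * v0 + u1 * v1 + u2 * v2 + u3 * v3 = 0) :
    u0 ^ 2 * (-(v0 ^ 2) + v1 ^ 2 + v2 ^ 2 + v3 ^ 2)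
      = (v1 ^ 2 + v2 ^ 2 + v3 ^ 2)
        + ((u1 * v2 - u2 * v1) ^ 2 + (u1 * v3 - u3 * v1) ^ 2 + (u2 * v3 - u3 * v2) ^ 2) := by
  linear_combination (u1 * v1 + u2 * v2 + u3 * v3 - u0 * v0) * hA
    + (-(v1 ^ 2 + v2 ^ 2 + v3 ^ 2)) * h

private lemma pos1 (u0 u1 u2 u3 p1 p2 p3 f : ℝ) (hu0 : 1 ≤ u0 ^ 2)
    (key : u0 ^ 2 * f = (p1 ^ 2 + p2 ^ 2 + p3 ^ 2)
      + ((u1 * p2 - u2 * p1) ^ 2 + (u1 * p3 - u3 * p1) ^ 2 + (u2 * p3 - u3 * p2) ^ 2)) :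
    0 ≤ f := by
  nlinarith [sq_nonneg p1, sq_nonneg p2, sq_nonneg p3, sq_nonneg (u1 * p2 - u2 * p1),
    sq_nonneg (u1 * p3 - u3 * p1), sq_nonneg (u2 * p3 - u3 * p2)]

private lemma pos2 (u0 u1 u2 u3 p1 p2 p3 f : ℝ) (hu0 : 1 ≤ u0 ^ 2)
    (key : u0 ^ 2 * f = (p1 ^ 2 + p2 ^ 2 + p3 ^ 2)
      + ((u1 * p2 - u2 * p1) ^ 2 + (u1 * p3 - u3 * p1) ^ 2 + (u2 * p3 - u3 * p2) ^ 2))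
    (hp : 0 < p1 ^ 2 + p2 ^ 2 + p3 ^ 2) :
    0 < f := by
  nlinarith [sq_nonneg (u1 * p2 - u2 * p1),
    sq_nonneg (u1 * p3 - u3 * p1), sq_nonneg (u2 * p3 - u3 * p2)]

private lemma aux1 (u0 u1 u2 u3 v0 v1 v2 v3 : ℝ)
    (h : -(u0 * u0) + u1 * u1 + u2 * u2 + u3 * u3 = -1) :
    0 ≤ (-(v0 ^ 2) + v1 ^ 2 + v2 ^ 2 + v3 ^ 2)
      + (u0 * v0 + u1 * v1 + u2 * v2 + u3 * v3) ^ 2 := by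
  have hu0 : 1 ≤ u0 ^ 2 := by nlinarith [sq_nonneg u1, sq_nonneg u2, sq_nonneg u3]
  exact pos1 u0 u1 u2 u3 _ _ _ _ hu0
    (keylem u0 u1 u2 u3 v0 v1 v2 v3 _ _ _ _ rfl rfl rfl rfl h)

private lemma aux2 (u0 u1 u2 u3 v0 v1 v2 v3 : ℝ)
    (h : -(u0 * u0) + u1 * u1 + u2 * u2 + u3 * u3 = -1)
    (hv : 0 < v0 ^ 2 + v1 ^ 2 + v2 ^ 2 + v3 ^ 2) :
    0 < (-(v0 ^ 2) + v1 ^ 2 + v2 ^ 2 + v3 ^ 2)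
      + 2 * (u0 * v0 + u1 * v1 + u2 * v2 + u3 * v3) ^ 2 := by
  have hu0 : 1 ≤ u0 ^ 2 := by nlinarith [sq_nonneg u1, sq_nonneg u2, sq_nonneg u3]
  rcases eq_or_ne (u0 * v0 + u1 * v1 + u2 * v2 + u3 * v3) 0 with hA | hA
  · by_cases hvs : v1 = 0 ∧ v2 = 0 ∧ v3 = 0
    · obtain ⟨e1, e2, e3⟩ := hvs
      subst e1; subst e2; subst e3
      exfalso
      have h0 : u0 * v0 = 0 := by linarith [hA]
      rcases mul_eq_zero.mp h0 with h' | h'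
      · rw [h'] at hu0; norm_num at hu0
      · rw [h'] at hv; norm_num at hv
    · have hvs' : 0 < v1 ^ 2 + v2 ^ 2 + v3 ^ 2 := by
        by_contra hc
        push_neg at hc
        exact hvs ⟨pow_eq_zero_iff two_ne_zero |>.mp
            (le_antisymm (by nlinarith [sq_nonneg v2, sq_nonneg v3]) (sq_nonneg v1)),
          pow_eq_zero_iff two_ne_zero |>.mp
            (le_antisymm (by nlinarith [sq_nonneg v1, sq_nonneg v3]) (sq_nonneg v2)),
          pow_eq_zero_iff two_ne_zero |>.mp
            (le_antisymm (by nlinarith [sq_nonneg v1, sq_nonneg v2]) (sq_nonneg v3))⟩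
      have hf : 0 < -(v0 ^ 2) + v1 ^ 2 + v2 ^ 2 + v3 ^ 2 :=
        pos2 u0 u1 u2 u3 v1 v2 v3 _ hu0 (key0lem u0 u1 u2 u3 v0 v1 v2 v3 h hA) hvs'
      nlinarith [hf, sq_nonneg (u0 * v0 + u1 * v1 + u2 * v2 + u3 * v3)]
  · have h1 := aux1 u0 u1 u2 u3 v0 v1 v2 v3 h
    nlinarith [h1, mul_self_pos.mpr hA]

private lemma combine (A B G D2 Z M : ℝ) (hA : 0 < A) (hB : 0 < B) (hD2 : 0 ≤ D2)
    (hs : 0 ≤ G + D2) (hsd : 0 < G + 2 * D2) (hZ : 0 ≤ Z) (hM : 0 ≤ M) :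
    0 < A * D2 + B * (G + D2) + Z + M := by
  rcases lt_or_eq_of_le hD2 with hp | hp
  · nlinarith [mul_pos hA hp, mul_nonneg hB.le hs]
  · nlinarith [mul_pos hB hsd, mul_nonneg hB.le hD2, hp]

set_option maxHeartbeats 1000000 in
/-- HKM positive-definiteness of the quadratic form given by the contracted
principal coefficients `B^{aβcδ}N_βN_δ` of the proposed system. -/
theorem stmt7 (χ η μ θ ζt : ℝ) (hχ : 0 < χ) (hη : 0 < η) (hμ : 0 < μ) (hθ : 0 < θ)
    (hζt : ζt ≥ -η / 3)
    (U N : Fin 4 → ℝ)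
    (hU : ∑ α, gmink α * U α * U α = -1)
    (hN : ∑ α, gmink α * N α * N α = 1)
    (hUN : ∑ α, gmink α * U α * N α = 0) :
    ∀ (V : Fin 4 → ℝ) (V4 : ℝ), ¬(V = 0 ∧ V4 = 0) →
      0 < χ * θ ^ 2 * (∑ α, U α * V α) ^ 2
        + η * θ * ((∑ α, gmink α * V α * V α) + (∑ α, U α * V α) ^ 2)
        + ((1/3) * η + ζt) * θ * (∑ α, N α * V α) ^ 2
        + μ * V4 ^ 2 := by
  intro V V4 hVV4
  have hd1 : ((1:Fin 4) = 0) = False := by decide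
  have hd2 : ((2:Fin 4) = 0) = False := by decide
  have hd3 : ((3:Fin 4) = 0) = False := by decide
  simp only [gmink, Fin.sum_univ_four] at hU ⊢
  norm_num [hd1, hd2, hd3] at hU ⊢
  by_cases hV0 : V = 0
  · have h4 : V4 ≠ 0 := fun h => hVV4 ⟨hV0, h⟩
    subst hV0
    have h42 : 0 < V4 ^ 2 := by rcases h4.lt_or_gt with h | h <;> nlinarith
    simp only [Pi.zero_apply]
    nlinarith [mul_pos hμ h42]
  · have hVpos : 0 < V 0 ^ 2 + V 1 ^ 2 + V 2 ^ 2 + V 3 ^ 2 := by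
      rcases Function.ne_iff.mp hV0 with ⟨i, hi⟩
      fin_cases i
      · nlinarith [mul_self_pos.mpr (show V 0 ≠ 0 from hi), sq_nonneg (V 1), sq_nonneg (V 2),
          sq_nonneg (V 3)]
      · nlinarith [mul_self_pos.mpr (show V 1 ≠ 0 from hi), sq_nonneg (V 0), sq_nonneg (V 2),
          sq_nonneg (V 3)]
      · nlinarith [mul_self_pos.mpr (show V 2 ≠ 0 from hi), sq_nonneg (V 0), sq_nonneg (V 1),
          sq_nonneg (V 3)]
      · nlinarith [mul_self_pos.mpr (show V 3 ≠ 0 from hi), sq_nonneg (V 0), sq_nonneg (V 1),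
          sq_nonneg (V 2)]
    have hs := aux1 (U 0) (U 1) (U 2) (U 3) (V 0) (V 1) (V 2) (V 3) hU
    have hsd := aux2 (U 0) (U 1) (U 2) (U 3) (V 0) (V 1) (V 2) (V 3) hU hVpos
    have hZ : 0 ≤ ((1/3) * η + ζt) * θ * (N 0 * V 0 + N 1 * V 1 + N 2 * V 2 + N 3 * V 3) ^ 2 :=
      mul_nonneg (mul_nonneg (by linarith) hθ.le) (sq_nonneg _)
    have hM : 0 ≤ μ * V4 ^ 2 := mul_nonneg hμ.le (sq_nonneg _)
    nlinarith [combine (χ * θ ^ 2) (η * θ)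
      (-(V 0 ^ 2) + V 1 ^ 2 + V 2 ^ 2 + V 3 ^ 2)
      ((U 0 * V 0 + U 1 * V 1 + U 2 * V 2 + U 3 * V 3) ^ 2)
      (((1/3) * η + ζt) * θ * (N 0 * V 0 + N 1 * V 1 + N 2 * V 2 + N 3 * V 3) ^ 2)
      (μ * V4 ^ 2)
      (mul_pos hχ (pow_pos hθ 2)) (mul_pos hη hθ) (sq_nonneg _)
      (by linarith [hs]) (by linarith [hsd]) hZ hM]
end

section
/- Let χ, η, μ, θ > 0, ζ̃ ∈ ℝ, σ := (4/3)η + ζ̃, and let U, N ∈ ℝ⁴ satisfy g_{αβ}U^αU^β = −1, g_{αβ}N^αN^β = 1, g_{αβ}U^αN^β = 0 (g = diag(−1,1,1,1)). Define, for (V,V₄) ∈ ℝ⁴ × ℝ, Q₊(V,V₄) := χθ²(U^αV_α)² + ηθ(g^{αγ}V_αV_γ + (U^αV_α)²) + ((1/3)η+ζ̃)θ(N^αV_α)² + μV₄² and Q₋(V,V₄) := −χθ²(U^αV_α)² − σθ(g^{αγ}V_αV_γ + (U^αV_α)²) − μV₄². Then: (i) Q₊(V,V₄) + Q₋(V,V₄)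 ≤ 0 for all (V,V₄) if and only if ζ̃ ≥ −η/3; (ii) Q₊ + Q₋ ≡ 0 if and only if ζ̃ = −η/3. (This expresses causality, respectively sharp causality, of the proposed system: all signal speeds are at most, respectively some equal to, the speed of light.) -/
open scoped BigOperators

lemma stepA (s t w u : ℝ) (hs : 0 ≤ s) (ht : 0 ≤ t)
    (hu : u^2 = 1 + s) (h1 : w^2 * u^2 ≤ t * s) : w^2 ≤ t := by
  nlinarith

lemma keyA (u0 u1 u2 u3 n0 n1 n2 n3 v0 v1 v2 v3 : ℝ)
    (hU : -u0^2 + u1^2 + u2^2 + u3^2 = -1)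
    (hN : -n0^2 + n1^2 + n2^2 + n3^2 = 1)
    (hUN : -(u0*n0) + u1*n1 + u2*n2 + u3*n3 = 0) :
    0 ≤ (-v0^2 + v1^2 + v2^2 + v3^2)
      + (u0*v0 + u1*v1 + u2*v2 + u3*v3)^2
      - (n0*v0 + n1*v1 + n2*v2 + n3*v3)^2 := by
  obtain ⟨p, hp⟩ : ∃ p, p = u0*v0 + u1*v1 + u2*v2 + u3*v3 := ⟨_, rfl⟩
  obtain ⟨q, hq⟩ : ∃ q, q = n0*v0 + n1*v1 + n2*v2 + n3*v3 := ⟨_, rfl⟩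
  obtain ⟨w0, hw0⟩ : ∃ w, w = v0 - p*u0 + q*n0 := ⟨_, rfl⟩
  obtain ⟨w1, hw1⟩ : ∃ w, w = v1 + p*u1 - q*n1 := ⟨_, rfl⟩
  obtain ⟨w2, hw2⟩ : ∃ w, w = v2 + p*u2 - q*n2 := ⟨_, rfl⟩
  obtain ⟨w3, hw3⟩ : ∃ w, w = v3 + p*u3 - q*n3 := ⟨_, rfl⟩
  have horth : w0*u0 = -(w1*u1 + w2*u2 + w3*u3) := by
    subst hw0 hw1 hw2 hw3 hp hq
    linear_combination (u0*v0 + u1*v1 + u2*v2 + u3*v3)*hU - (n0*v0 + n1*v1 + n2*v2 + n3*v3)*hUN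
  have hcs : (w1*u1 + w2*u2 + w3*u3)^2 ≤ (w1^2 + w2^2 + w3^2)*(u1^2 + u2^2 + u3^2) := by
    nlinarith [sq_nonneg (w1*u2 - w2*u1), sq_nonneg (w1*u3 - w3*u1), sq_nonneg (w2*u3 - w3*u2)]
  have hU0 : u0^2 = 1 + (u1^2 + u2^2 + u3^2) := by linarith
  have h1 : w0^2 * u0^2 ≤ (w1^2 + w2^2 + w3^2)*(u1^2 + u2^2 + u3^2) := by
    calc w0^2 * u0^2 = (w0*u0)^2 := by ring
    _ = (w1*u1 + w2*u2 + w3*u3)^2 := by rw [horth]; ring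
    _ ≤ _ := hcs
  have h2 : w0^2 ≤ w1^2 + w2^2 + w3^2 :=
    stepA _ _ _ _ (by positivity) (by positivity) hU0 h1
  have hEq : (-v0^2 + v1^2 + v2^2 + v3^2) + p^2 - q^2 = -w0^2 + w1^2 + w2^2 + w3^2 := by
    subst hw0 hw1 hw2 hw3 hp hq
    linear_combination (-(u0*v0 + u1*v1 + u2*v2 + u3*v3)^2)*hU + (-(n0*v0 + n1*v1 + n2*v2 + n3*v3)^2)*hN + 2*(u0*v0 + u1*v1 + u2*v2 + u3*v3)*(n0*v0 + n1*v1 + n2*v2 + n3*v3)*hUN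
  rw [hp, hq] at hEq
  linarith

set_option maxHeartbeats 1000000 in
/-- Causality (and sharp causality) of the proposed system: the sum of the two
contracted principal quadratic forms is nonpositive iff `ζ̃ ≥ −η/3`, and
identically zero iff `ζ̃ = −η/3`. -/
theorem stmt9 (χ η μ θ ζt σ : ℝ) (hχ : 0 < χ) (hη : 0 < η) (hμ : 0 < μ) (hθ : 0 < θ)
    (hσ : σ = (4/3) * η + ζt)
    (U N : Fin 4 → ℝ)
    (hU : ∑ α, gmink α * U α * U α = -1)
    (hN : ∑ α, gmink α * N α * N α = 1)
    (hUN : ∑ α, gmink α * U α * N α = 0) :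
    (let Qp : (Fin 4 → ℝ) → ℝ → ℝ := fun V V4 =>
        χ * θ ^ 2 * (∑ α, U α * V α) ^ 2
        + η * θ * ((∑ α, gmink α * V α * V α) + (∑ α, U α * V α) ^ 2)
        + ((1/3) * η + ζt) * θ * (∑ α, N α * V α) ^ 2
        + μ * V4 ^ 2
     let Qm : (Fin 4 → ℝ) → ℝ → ℝ := fun V V4 =>
        -(χ * θ ^ 2) * (∑ α, U α * V α) ^ 2
        - σ * θ * ((∑ α, gmink α * V α * V α) + (∑ α, U α * V α) ^ 2)
        - μ * V4 ^ 2
     ((∀ (V : Fin 4 → ℝ) (V4 : ℝ), Qp V V4 + Qm V V4 ≤ 0) ↔ ζt ≥ -η / 3) ∧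
     ((∀ (V : Fin 4 → ℝ) (V4 : ℝ), Qp V V4 + Qm V V4 = 0) ↔ ζt = -η / 3)) := by
  intro Qp Qm
  subst hσ
  -- coordinate versions of the hypotheses
  have hU' : -(U 0)^2 + (U 1)^2 + (U 2)^2 + (U 3)^2 = -1 := by
    have := hU; simp [gmink, Fin.sum_univ_four] at this; linarith [this]
  have hN' : -(N 0)^2 + (N 1)^2 + (N 2)^2 + (N 3)^2 = 1 := by
    have := hN; simp [gmink, Fin.sum_univ_four] at this; linarith [this]
  have hUN' : -(U 0 * N 0) + U 1 * N 1 + U 2 * N 2 + U 3 * N 3 = 0 := by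
    have := hUN; simp [gmink, Fin.sum_univ_four] at this; linarith [this]
  -- the key quadratic form K
  have hKnn : ∀ V : Fin 4 → ℝ,
      0 ≤ (∑ α, gmink α * V α * V α) + (∑ α, U α * V α) ^ 2 - (∑ α, N α * V α) ^ 2 := by
    intro V
    have h := keyA (U 0) (U 1) (U 2) (U 3) (N 0) (N 1) (N 2) (N 3) (V 0) (V 1) (V 2) (V 3)
      hU' hN' hUN'
    simp [gmink, Fin.sum_univ_four]
    nlinarith [h]
  -- existence of V with K V > 0
  have hpos : ∃ V : Fin 4 → ℝ,
      0 < (∑ α, gmink α * V α * V α) + (∑ α, U α * V α) ^ 2 - (∑ α, N α * V α) ^ 2 := by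
    by_contra hcon
    push_neg at hcon
    have h0 := keyA (U 0) (U 1) (U 2) (U 3) (N 0) (N 1) (N 2) (N 3) 1 0 0 0 hU' hN' hUN'
    have h1 := hcon ![0,1,0,0]
    have h2 := hcon ![0,0,1,0]
    have h3 := hcon ![0,0,0,1]
    simp [gmink, Fin.sum_univ_four] at h1 h2 h3
    nlinarith [h0, h1, h2, h3]
  -- the algebraic identity
  have hform : ∀ (V : Fin 4 → ℝ) (V4 : ℝ), Qp V V4 + Qm V V4
      = -((η/3 + ζt) * θ) * ((∑ α, gmink α * V α * V α) + (∑ α, U α * V α) ^ 2 - (∑ α, N α * V α) ^ 2) := by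
    intro V V4
    simp only [Qp, Qm]
    ring
  constructor
  · constructor
    · intro h
      obtain ⟨V, hV⟩ := hpos
      have hh := h V 0
      rw [hform] at hh
      obtain ⟨k, hk⟩ : ∃ k, k = (∑ α, gmink α * V α * V α) + (∑ α, U α * V α) ^ 2 - (∑ α, N α * V α) ^ 2 := ⟨_, rfl⟩
      rw [← hk] at hh hV
      nlinarith [mul_pos hθ hV]
    · intro hζ V V4
      rw [hform]
      have hc : 0 ≤ η/3 + ζt := by linarith
      obtain ⟨k, hk⟩ : ∃ k, k = (∑ α, gmink α * V α * V α) + (∑ α, U α * V α) ^ 2 - (∑ α, N α * V α) ^ 2 := ⟨_, rfl⟩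
      have hKV := hKnn V
      rw [← hk] at hKV ⊢
      nlinarith [mul_nonneg (mul_nonneg hc hθ.le) hKV]
  · constructor
    · intro h
      obtain ⟨V, hV⟩ := hpos
      have hh := h V 0
      rw [hform] at hh
      obtain ⟨k, hk⟩ : ∃ k, k = (∑ α, gmink α * V α * V α) + (∑ α, U α * V α) ^ 2 - (∑ α, N α * V α) ^ 2 := ⟨_, rfl⟩
      rw [← hk] at hh hV
      have hc : (η/3 + ζt) * (θ * k) = 0 := by linear_combination -hh
      rcases mul_eq_zero.mp hc with h' | h'
      · linarith
      · nlinarith [mul_pos hθ hV]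
    · intro hζ V V4
      rw [hform]
      have h0 : η/3 + ζt = 0 := by rw [hζ]; ring
      rw [h0]; ring
end
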